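/- arXiv:2006.08734 — 14 statements merged into one kernel-verified Lean document; each statement's English description precedes it below -/
import Mathlib

section
/- A loop Q satisfies the identity x(x·yz) = (x·xy)z for all x,y,z if and only if Q is a left alternative loop (x·xy = xx·y) in which every square x² belongs to the left nucleus N_λ. -/
/-- A loop: binary operation with two-sided identity and unique divisions. -/
class Loop (Q : Type*) extends Mul Q, One Q where
  ld : Q → Q → Q   -- left division: `ld x y = x \ y`
  rd : Q → Q → Q   -- right division: `rd x y = x / y`
  one_mul : ∀ x : Q, 1 * x = x
  mul_one : ∀ x : Q, x * 1 = x
  mul_ld : ∀ x y : Q, x * ld x y = y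
  ld_mul : ∀ x y : Q, ld x (x * y) = y
  rd_mul : ∀ x y : Q, rd x y * y = x
  mul_rd : ∀ x y : Q, rd (x * y) y = x

namespace Loop
variable {Q : Type*} [Loop Q]
/-- left inverse `x^λ = 1 / x` -/
def linv (x : Q) : Q := rd 1 x
/-- right inverse `x^ρ = x \ 1` -/
def rinv (x : Q) : Q := ld x 1
/-- left nucleus -/
def Nl (Q : Type*) [Loop Q] : Set Q := {a | ∀ x y : Q, a * (x * y) = (a * x) * y}
/-- middle nucleus -/
def Nm (Q : Type*) [Loop Q] : Set Q := {a | ∀ x y : Q, x * (a * y) = (x * a) * y}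
/-- right nucleus -/
def Nr (Q : Type*) [Loop Q] : Set Q := {a | ∀ x y : Q, (x * y) * a = x * (y * a)}
/-- the nucleus -/
def N (Q : Type*) [Loop Q] : Set Q := Nl Q ∩ Nm Q ∩ Nr Q
/-- `S` is a subloop -/
def IsSubloop (S : Set Q) : Prop :=
  (1 : Q) ∈ S ∧ ∀ a ∈ S, ∀ b ∈ S, a * b ∈ S ∧ ld a b ∈ S ∧ rd a b ∈ S
/-- normality of a subloop via the standard equational characterization -/
def IsNormal (S : Set Q) : Prop :=
  IsSubloop S ∧ ∀ x y : Q,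
    (x * ·) '' S = (· * x) '' S ∧
    (· * y) '' ((x * ·) '' S) = (x * ·) '' ((· * y) '' S) ∧
    (x * ·) '' ((y * ·) '' S) = ((x * y) * ·) '' S
end Loop
open Loop in
theorem stmt2 {Q : Type*} [Loop Q] :
    (∀ x y z : Q, x * (x * (y * z)) = (x * (x * y)) * z) ↔
      ((∀ x y : Q, x * (x * y) = (x * x) * y) ∧ ∀ x : Q, x * x ∈ Nl Q) := by
  constructor
  · intro h
    have lap : ∀ x y : Q, x * (x * y) = (x * x) * y := by
      intro x y
      have := h x 1 y
      simpa [Loop.one_mul, Loop.mul_one] using this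
    refine ⟨lap, fun x y z => ?_⟩
    have h1 := h x y z
    rw [lap x (y * z), lap x y] at h1
    exact h1
  · rintro ⟨lap, nuc⟩ x y z
    rw [lap x (y * z), nuc x y z, ← lap x y]
end

section
/- A loop Q satisfies x(x·yz) = (x·xy)z for all x,y,z if and only if Q has the left inverse property and every square x² belongs to the left nucleus N_λ. -/
open Loop in
theorem stmt3 {Q : Type*} [Loop Q] :
    (∀ x y z : Q, x * (x * (y * z)) = (x * (x * y)) * z) ↔
      ((∀ x y : Q, linv x * (x * y) = y) ∧ ∀ x : Q, x * x ∈ Nl Q) := by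
  constructor
  · intro h
    have sq : ∀ x z : Q, x * (x * z) = (x * x) * z := by
      intro x z
      have := h x 1 z
      simpa [Loop.one_mul, Loop.mul_one] using this
    have lip : ∀ x y : Q, linv x * (x * y) = y := by
      intro x y
      have hx : linv x * x = 1 := Loop.rd_mul 1 x
      have h1 : linv x * (linv x * (x * y)) = linv x * y := by
        have := h (linv x) x y
        rw [hx, Loop.mul_one] at this
        exact this
      have h2 := congrArg (Loop.ld (linv x)) h1
      simpa [Loop.ld_mul] using h2
    refine ⟨lip, fun x u v => ?_⟩
    calc (x * x) * (u * v) = x * (x * (u * v)) := (sq x _).symm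
      _ = (x * (x * u)) * v := h x u v
      _ = ((x * x) * u) * v := by rw [sq]
  · rintro ⟨lip, sq⟩ x y z
    have hx : linv x * x = 1 := Loop.rd_mul 1 x
    have hxl : (x * x) * linv x = x := by
      have h1 : (x * x) * (linv x * x) = ((x * x) * linv x) * x := sq x (linv x) x
      rw [hx, Loop.mul_one] at h1
      have h2 := congrArg (fun t => Loop.rd t x) h1
      simpa [Loop.mul_rd] using h2.symm
    have key : ∀ t : Q, x * (x * t) = (x * x) * t := by
      intro t
      symm
      calc (x * x) * t = (x * x) * (linv x * (x * t)) := by rw [lip]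
        _ = ((x * x) * linv x) * (x * t) := sq x _ _
        _ = x * (x * t) := by rw [hxl]
    calc x * (x * (y * z)) = (x * x) * (y * z) := key _
      _ = ((x * x) * y) * z := sq x y z
      _ = (x * (x * y)) * z := by rw [key]
end

section
/- In any loop Q, the identities x(x·yz) = (x·xy)z and y(x·xz) = (y·xx)z (for all x,y,z) are equivalent. -/
section StmtAux
open Loop
variable {Q : Type*} [Loop Q]

private lemma stmt4.lcan {x u v : Q} (h : x * u = x * v) : u = v := by
  have := congrArg (Loop.ld x) h
  rwa [Loop.ld_mul, Loop.ld_mul] at this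

private lemma stmt4.rcan {x u v : Q} (h : u * x = v * x) : u = v := by
  have := congrArg (fun w => Loop.rd w x) h
  simp only [Loop.mul_rd] at this
  exact this

private lemma stmt4.dirAB
    (A : ∀ x y z : Q, x * (x * (y * z)) = (x * (x * y)) * z) :
    ∀ x y z : Q, y * (x * (x * z)) = (y * (x * x)) * z := by
  have lalt : ∀ x z : Q, x * (x * z) = (x * x) * z := by
    intro x z
    have h := A x 1 z
    rwa [Loop.one_mul, Loop.mul_one] at h
  have nl : ∀ x y z : Q, (x * x) * (y * z) = ((x * x) * y) * z := by
    intro x y z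
    have h := A x y z
    rwa [lalt x (y * z), lalt x y] at h
  -- c := ld (x*x) 1 is a two-sided "inverse" of x*x
  have h3 : ∀ x z : Q, (x * x) * (Loop.ld (x * x) 1 * z) = z := by
    intro x z
    rw [nl x (Loop.ld (x * x) 1) z, Loop.mul_ld, Loop.one_mul]
  have h3' : ∀ x z : Q, Loop.ld (x * x) 1 * ((x * x) * z) = z := by
    intro x z
    refine stmt4.lcan (x := x * x) ?_
    exact h3 x ((x * x) * z)
  -- c is in the left nucleus (on all products)
  have h4 : ∀ x u z : Q,
      Loop.ld (x * x) 1 * (u * z) = (Loop.ld (x * x) 1 * u) * z := by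
    intro x u z
    refine stmt4.lcan (x := x * x) ?_
    rw [h3 x (u * z), nl x (Loop.ld (x * x) 1 * u) z, h3 x u]
  -- x' := (ld (x*x) 1) * x is a two-sided translation inverse of x
  have h5 : ∀ x z : Q, (Loop.ld (x * x) 1 * x) * (x * z) = z := by
    intro x z
    rw [← h4 x x (x * z), lalt x z, h3' x z]
  have h5b : ∀ x z : Q, x * ((Loop.ld (x * x) 1 * x) * z) = z := by
    intro x z
    refine stmt4.lcan (x := Loop.ld (x * x) 1 * x) ?_
    rw [h5 x ((Loop.ld (x * x) 1 * x) * z)]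
  -- main step: squares are in the middle nucleus
  have h6 : ∀ x u z : Q, u * ((x * x) * z) = (u * (x * x)) * z := by
    intro x u z
    have key1 : ∀ w : Q,
        (Loop.ld (x * x) 1 * (Loop.ld (u * u) 1 * u)) * (u * ((x * x) * w)) = w := by
      intro w
      rw [← h4 x (Loop.ld (u * u) 1 * u) (u * ((x * x) * w)), h5 u ((x * x) * w),
        h3' x w]
    have key2 : ∀ w : Q, u * ((x * x) * w) =
        ((Loop.ld ((Loop.ld (x * x) 1 * (Loop.ld (u * u) 1 * u)) *
            (Loop.ld (x * x) 1 * (Loop.ld (u * u) 1 * u))) 1 *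
          (Loop.ld (x * x) 1 * (Loop.ld (u * u) 1 * u))) * w) := by
      intro w
      refine stmt4.lcan (x := Loop.ld (x * x) 1 * (Loop.ld (u * u) 1 * u)) ?_
      rw [key1 w, h5b (Loop.ld (x * x) 1 * (Loop.ld (u * u) 1 * u)) w]
    have hone := key2 1
    rw [Loop.mul_one, Loop.mul_one] at hone
    rw [key2 z, ← hone]
  intro x y z
  rw [lalt x z, h6 x y z]

private lemma stmt4.dirBA
    (B : ∀ x y z : Q, y * (x * (x * z)) = (y * (x * x)) * z) :
    ∀ x y z : Q, x * (x * (y * z)) = (x * (x * y)) * z := by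
  have lalt : ∀ x z : Q, x * (x * z) = (x * x) * z := by
    intro x z
    have h := B x 1 z
    rwa [Loop.one_mul, Loop.one_mul] at h
  have nm : ∀ x y z : Q, y * ((x * x) * z) = (y * (x * x)) * z := by
    intro x y z
    have h := B x y z
    rwa [lalt x z] at h
  -- c := rd 1 (x*x)
  have h3 : ∀ x z : Q, Loop.rd 1 (x * x) * ((x * x) * z) = z := by
    intro x z
    rw [nm x (Loop.rd 1 (x * x)) z, Loop.rd_mul, Loop.one_mul]
  have h3' : ∀ x z : Q, (x * x) * (Loop.rd 1 (x * x) * z) = z := by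
    intro x z
    refine stmt4.lcan (x := Loop.rd 1 (x * x)) ?_
    exact h3 x (Loop.rd 1 (x * x) * z)
  have hac : ∀ x : Q, (x * x) * Loop.rd 1 (x * x) = 1 := by
    intro x
    have h := h3' x 1
    rwa [Loop.mul_one] at h
  have h4a : ∀ x u : Q, (u * (x * x)) * Loop.rd 1 (x * x) = u := by
    intro x u
    have h := nm x u (Loop.rd 1 (x * x))
    rw [hac x, Loop.mul_one] at h
    exact h.symm
  have h4b : ∀ x u : Q, (u * Loop.rd 1 (x * x)) * (x * x) = u := by
    intro x u
    refine stmt4.rcan (x := Loop.rd 1 (x * x)) ?_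
    exact h4a x (u * Loop.rd 1 (x * x))
  -- c is in the middle nucleus (on all products)
  have h4 : ∀ x u z : Q,
      u * (Loop.rd 1 (x * x) * z) = (u * Loop.rd 1 (x * x)) * z := by
    intro x u z
    conv_rhs => rw [← h3' x z]
    rw [nm x (u * Loop.rd 1 (x * x)) (Loop.rd 1 (x * x) * z), h4b x u]
  -- x' := x * (rd 1 (x*x)) is a two-sided translation inverse of x
  have h5 : ∀ x z : Q, x * ((x * Loop.rd 1 (x * x)) * z) = z := by
    intro x z
    rw [← h4 x x z, lalt x (Loop.rd 1 (x * x) * z), h3' x z]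
  have h5b : ∀ x z : Q, (x * Loop.rd 1 (x * x)) * (x * z) = z := by
    intro x z
    refine stmt4.lcan (x := x) ?_
    rw [h5 x (x * z)]
  -- main step: squares are in the left nucleus
  have h6 : ∀ x y z : Q, (x * x) * (y * z) = ((x * x) * y) * z := by
    intro x y z
    have key1 : ∀ w : Q,
        ((y * Loop.rd 1 (y * y)) * Loop.rd 1 (x * x)) * ((x * x) * (y * w)) = w := by
      intro w
      rw [← h4 x (y * Loop.rd 1 (y * y)) ((x * x) * (y * w)), h3 x (y * w),
        h5b y w]
    have key2 : ∀ w : Q, (x * x) * (y * w) =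
        (((y * Loop.rd 1 (y * y)) * Loop.rd 1 (x * x)) *
          Loop.rd 1 (((y * Loop.rd 1 (y * y)) * Loop.rd 1 (x * x)) *
            ((y * Loop.rd 1 (y * y)) * Loop.rd 1 (x * x)))) * w := by
      intro w
      refine stmt4.lcan (x := (y * Loop.rd 1 (y * y)) * Loop.rd 1 (x * x)) ?_
      rw [key1 w, h5 ((y * Loop.rd 1 (y * y)) * Loop.rd 1 (x * x)) w]
    have hone := key2 1
    rw [Loop.mul_one, Loop.mul_one] at hone
    rw [key2 z, ← hone]
  intro x y z
  rw [lalt x (y * z), lalt x y, h6 x y z]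

end StmtAux

open Loop in
theorem stmt4 {Q : Type*} [Loop Q] :
    (∀ x y z : Q, x * (x * (y * z)) = (x * (x * y)) * z) ↔
      (∀ x y z : Q, y * (x * (x * z)) = (y * (x * x)) * z) :=
  ⟨fun A => stmt4.dirAB A, fun B => stmt4.dirBA B⟩
end

section
/- In any loop with the left inverse property, the left nucleus equals the middle nucleus. -/
open Loop in
theorem stmt5 {Q : Type*} [Loop Q] (hlip : ∀ x y : Q, linv x * (x * y) = y) :
    Nl Q = Nm Q := by
  -- basic facts
  have hcancel : ∀ x y z : Q, x * y = x * z → y = z := fun x y z h => by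
    have := congrArg (Loop.ld x) h
    rwa [Loop.ld_mul, Loop.ld_mul] at this
  have hinv1 : ∀ x : Q, linv x * x = 1 := fun x => by
    have := hlip x 1; rwa [Loop.mul_one] at this
  have hll : ∀ x : Q, linv (linv x) = x := fun x => by
    have := hlip (linv x) x
    rwa [hinv1, Loop.mul_one] at this
  have hlip' : ∀ x y : Q, x * (linv x * y) = y := fun x y => by
    have := hlip (linv x) y; rwa [hll] at this
  have huniq : ∀ u x : Q, u * x = 1 → u = linv x := fun u x h => by
    have := Loop.mul_rd u x; rw [h] at this; exact this.symm
  ext a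
  constructor
  · intro ha x y
    -- ha : a ∈ Nl
    have hla : linv a ∈ Nl Q := by
      intro u v
      apply hcancel a
      rw [hlip', ha, hlip']
    have hinvxa : linv (x * a) = linv a * linv x := by
      refine (huniq _ _ ?_).symm
      rw [← hla, hlip, hinv1]
    apply hcancel (linv (x * a))
    rw [hlip, hinvxa, ← hla, hlip, hlip]
  · intro ha x y
    -- ha : a ∈ Nm
    have hrcancel : ∀ x y z : Q, x * z = y * z → x = y := fun x y z h => by
      have := congrArg (fun w => Loop.rd w z) h
      simpa only [Loop.mul_rd] using this
    have hinv2 : ∀ x : Q, x * linv x = 1 := fun x => by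
      have := hlip' x 1; rwa [Loop.mul_one] at this
    have hra : ∀ u : Q, (u * a) * linv a = u := fun u => by
      have := ha u (linv a); rw [hinv2, Loop.mul_one] at this; exact this.symm
    have h1 : ∀ u : Q, (u * linv a) * a = u := fun u => by
      apply hrcancel _ _ (linv a)
      rw [hra]
    have hla : linv a ∈ Nm Q := by
      intro u v
      calc u * (linv a * v) = (u * linv a * a) * (linv a * v) := by rw [h1]
        _ = (u * linv a) * (a * (linv a * v)) := (ha _ _).symm
        _ = (u * linv a) * v := by rw [hlip']
    have hinvax : linv (a * x) = linv x * linv a := by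
      refine (huniq _ _ ?_).symm
      rw [← hla, hlip, hinv1]
    apply hcancel (linv (a * x))
    rw [hlip, hinvax, ← hla, hlip, hlip]
end

section
/- A loop Q is a C loop (satisfies both x(x·yz) = (x·xy)z and (zy·x)x = z(yx·x)) if and only if Q satisfies the identity (yx·x)z = y(x·xz) for all x,y,z. -/
namespace CProofAux
open Loop
variable {Q : Type*} [Loop Q]

section Backward
variable (K : ∀ x y z : Q, x * (y * (y * z)) = ((x * y) * y) * z)
include K

lemma hA : ∀ y z : Q, (y * y) * z = y * (y * z) := by
  intro y z
  have := K 1 y z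
  rw [Loop.one_mul, Loop.one_mul] at this
  exact this.symm

lemma hB : ∀ x y : Q, (x * y) * y = x * (y * y) := by
  intro x y
  have := K x y 1
  rw [Loop.mul_one, Loop.mul_one] at this
  exact this.symm

lemma hNm : ∀ x y z : Q, x * ((y * y) * z) = (x * (y * y)) * z := by
  intro x y z
  rw [hA K y z, ← hB K x y]
  exact K x y z

omit K in
lemma linv_mul : ∀ y : Q, linv y * y = 1 := fun y => Loop.rd_mul 1 y

lemma linv_sq : ∀ y : Q, linv y * (y * y) = y := by
  intro y
  rw [← hB K, linv_mul, Loop.one_mul]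

/-- left inverse property -/
lemma LIP : ∀ (y w : Q), linv y * (y * w) = w := by
  intro y w
  have h1 : linv y * ((y * y) * ld y w) = y * ld y w := by
    rw [hNm K, linv_sq K]
  rw [hA K, Loop.mul_ld] at h1
  exact h1

lemma LIP' : ∀ (y w : Q), y * (linv y * w) = w := by
  intro y w
  calc y * (linv y * w) = y * (linv y * (y * ld y w)) := by rw [Loop.mul_ld]
    _ = y * ld y w := by rw [LIP K]
    _ = w := Loop.mul_ld y w

lemma mul_linv : ∀ y : Q, y * linv y = 1 := by
  intro y
  have := LIP' K y 1
  rwa [Loop.mul_one] at this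

/-- right inverse property -/
lemma RIP : ∀ (u y : Q), (u * y) * linv y = u := by
  intro u y
  have h1 : ((rd u y) * (y * y)) * linv y = rd u y * y := by
    rw [← hNm K, hA K, mul_linv K, Loop.mul_one]
  rw [← hB K, Loop.rd_mul] at h1
  exact h1

lemma linv_linv : ∀ y : Q, linv (linv y) = y := by
  intro y
  have := LIP K (linv y) y
  rwa [linv_mul, Loop.mul_one] at this

lemma RIP' : ∀ (u y : Q), (u * linv y) * y = u := by
  intro u y
  have := RIP K u (linv y)
  rwa [linv_linv K] at this

lemma linv_injective : ∀ u v : Q, linv u = linv v → u = v := by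
  intro u v h
  rw [← linv_linv K u, h, linv_linv K]

/-- antiautomorphic inverse property -/
lemma AIP : ∀ x y : Q, linv (x * y) = linv y * linv x := by
  intro x y
  have h1 : linv (x * y) * x = linv y := by
    have := LIP K (x * y) (linv y)
    rwa [RIP K] at this
  have h3 := Loop.mul_rd (linv (x * y)) x
  rw [h1] at h3
  have h4 := Loop.mul_rd (linv y * linv x) x
  rw [RIP' K] at h4
  rw [← h3, h4]

lemma E1 : ∀ x y w : Q, x * (y * w) = (x * (y * y)) * (linv y * w) := by
  intro x y w
  have := K x y (linv y * w)
  rwa [LIP' K, hB K] at this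

lemma E1m : ∀ u s w : Q, (u * s) * w = (u * linv s) * ((s * s) * w) := by
  intro u s w
  have h := E1 K (u * s) (linv s) (s * w)
  rw [LIP K, linv_linv K, ← hA K] at h
  have h2 : (u * s) * (linv s * linv s) = u * linv s := by
    rw [← hB K, RIP K]
  rw [h2] at h
  exact h

lemma W : ∀ x y z : Q, (x * y) * (linv y * z) = (x * linv y) * (y * z) := by
  intro x y z
  have h := E1m K x y (linv y * z)
  rwa [hA K, LIP' K] at h

lemma inv_shift : ∀ y z : Q, z * linv (y * z) = linv y := by
  intro y z
  rw [AIP K, LIP' K]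

lemma L1 : ∀ x y v : Q, (x * (y * (y * linv v))) * v = x * (y * y) := by
  intro x y v
  have h := K x y (linv v)
  rw [hB K] at h
  rw [h]
  exact RIP' K (x * (y * y)) v

lemma L2 : ∀ x y w : Q, (x * (y * linv w)) * (w * y) = x * (y * y) := by
  intro x y w
  have h := L1 K x y (w * y)
  rwa [inv_shift K] at h

lemma L3 : ∀ u w v : Q, ((u * linv w) * v) * (linv v * (w * w)) = u * w := by
  intro u w v
  have h2 := L2 K v w u
  have h3 := LIP K (v * (w * linv u)) (u * w)
  rw [h2] at h3
  rw [AIP K, AIP K, linv_linv K] at h3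
  rw [← W K] at h3
  exact h3

lemma L4 : ∀ p v w : Q, (p * v) * (linv v * (w * w)) = p * (w * w) := by
  intro p v w
  have h := L3 K (p * w) w v
  rwa [RIP K, hB K] at h

lemma L5' : ∀ z y w : Q, z * (linv (y * z) * (w * w)) = linv y * (w * w) := by
  intro z y w
  have h := L4 K (linv y) (y * z) w
  rwa [LIP K] at h

lemma L5 : ∀ z q w : Q, z * ((linv z * q) * (w * w)) = q * (w * w) := by
  intro z q w
  have h := L5' K z (linv q) w
  rwa [AIP K, linv_linv K] at h

lemma L6 : ∀ y x w : Q, linv y * (x * (w * w)) = (linv y * x) * (w * w) := by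
  intro y x w
  have h := LIP K y ((linv y * x) * (w * w))
  rwa [L5 K] at h

lemma Nr_sq : ∀ z y x : Q, (z * y) * (x * x) = z * (y * (x * x)) := by
  intro z y x
  have h := L6 K (linv z) y x
  rw [linv_linv K] at h
  exact h.symm

lemma Nl_sq : ∀ x u v : Q, (x * x) * (u * v) = ((x * x) * u) * v := by
  intro x u v
  apply linv_injective K
  simp only [AIP K]
  exact Nr_sq K (linv v) (linv u) (linv x)

end Backward

section Forward
variable (LC : ∀ x y z : Q, x * (x * (y * z)) = (x * (x * y)) * z)
variable (RC : ∀ x y z : Q, ((z * y) * x) * x = z * ((y * x) * x))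

include LC in
lemma fA : ∀ x z : Q, (x * x) * z = x * (x * z) := by
  intro x z
  have := LC x 1 z
  rw [Loop.one_mul, Loop.mul_one] at this
  exact this.symm

include RC in
lemma fB : ∀ z x : Q, (z * x) * x = z * (x * x) := by
  intro z x
  have := RC x 1 z
  rwa [Loop.one_mul, Loop.mul_one] at this

include LC in
lemma fNl : ∀ x y z : Q, (x * x) * (y * z) = ((x * x) * y) * z := by
  intro x y z
  rw [fA LC, fA LC, LC]

include RC in
lemma fNr : ∀ y z x : Q, (y * z) * (x * x) = y * (z * (x * x)) := by
  intro y z x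
  rw [← fB RC, RC, fB RC]

lemma flinv_mul : ∀ x : Q, linv x * x = 1 := fun x => Loop.rd_mul 1 x

include RC in
lemma flinv_sq : ∀ x : Q, linv x * (x * x) = x := by
  intro x
  rw [← fB RC, flinv_mul, Loop.one_mul]

include RC in
lemma fRIP' : ∀ u x : Q, (u * linv x) * x = u := by
  intro u x
  have h1 : (u * linv x) * (x * x) = u * x := by
    rw [fNr RC, flinv_sq RC]
  have h2 : ((u * linv x) * x) * x = u * x := by
    rw [fB RC]; exact h1
  have h3 := Loop.mul_rd ((u * linv x) * x) x
  rw [h2] at h3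
  exact h3.symm.trans (Loop.mul_rd u x)

include RC in
lemma fRIP : ∀ v x : Q, (v * x) * linv x = v := by
  intro v x
  have h := Loop.mul_rd ((v * x) * linv x) x
  rw [fRIP' RC] at h
  exact h.symm.trans (Loop.mul_rd v x)

lemma frinv_mul : ∀ x : Q, x * rinv x = 1 := fun x => Loop.mul_ld x 1

include LC in
lemma fLIP'r : ∀ x v : Q, x * (rinv x * v) = v := by
  intro x v
  have h1 : (x * x) * (rinv x * v) = x * v := by
    rw [fNl LC, fA LC, frinv_mul, Loop.mul_one]
  have h2 : x * (x * (rinv x * v)) = x * v := by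
    rw [← fA LC]; exact h1
  have h3 := Loop.ld_mul x (x * (rinv x * v))
  rw [h2] at h3
  exact h3.symm.trans (Loop.ld_mul x v)

include LC in
lemma fLIPr : ∀ x w : Q, rinv x * (x * w) = w := by
  intro x w
  have h := Loop.ld_mul x (rinv x * (x * w))
  rw [fLIP'r LC] at h
  exact h.symm.trans (Loop.ld_mul x w)

include LC in
lemma frinv_eq : ∀ x : Q, linv x = rinv x := by
  intro x
  have h : rinv x * x = 1 := by
    have := fLIPr LC x 1
    rwa [Loop.mul_one] at this
  have h2 := Loop.mul_rd (rinv x) x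
  rw [h] at h2
  exact h2

include LC in
lemma fLIP : ∀ x w : Q, linv x * (x * w) = w := by
  intro x w
  rw [frinv_eq LC]; exact fLIPr LC x w

include LC RC in
lemma fh1 : ∀ s t : Q, linv (s * t) * s = linv t := by
  intro s t
  have h := fLIP LC (s * t) (linv t)
  rwa [fRIP RC] at h

include LC RC in
lemma fe49 : ∀ p x y : Q, (p * (x * (x * y))) * linv y = p * (x * x) := by
  intro p x y
  have h2 : linv (x * (x * y)) * (x * x) = linv y := by
    have := fh1 LC RC (x * x) y
    rwa [fA LC] at this
  have h3 : (p * (x * (x * y))) * (linv (x * (x * y)) * (x * x)) = p * (x * x) := by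
    rw [← fNr RC, fRIP RC]
  rw [h2] at h3
  exact h3

include LC RC in
lemma fNm : ∀ y x z : Q, y * ((x * x) * z) = (y * (x * x)) * z := by
  intro y x z
  have h := fe49 LC RC y x z
  rw [← h, fRIP' RC, ← fA LC]

end Forward
end CProofAux

open Loop in
theorem stmt6 {Q : Type*} [Loop Q] :
    ((∀ x y z : Q, x * (x * (y * z)) = (x * (x * y)) * z) ∧
     (∀ x y z : Q, ((z * y) * x) * x = z * ((y * x) * x))) ↔
      (∀ x y z : Q, ((y * x) * x) * z = y * (x * (x * z))) := by
  constructor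
  · rintro ⟨LC, RC⟩ x y z
    calc ((y * x) * x) * z = (y * (x * x)) * z := by rw [CProofAux.fB RC]
      _ = y * ((x * x) * z) := by rw [CProofAux.fNm LC RC]
      _ = y * (x * (x * z)) := by rw [CProofAux.fA LC]
  · intro H
    have K : ∀ x y z : Q, x * (y * (y * z)) = ((x * y) * y) * z :=
      fun x y z => (H y x z).symm
    constructor
    · intro x y z
      calc x * (x * (y * z)) = (x * x) * (y * z) := by rw [CProofAux.hA K]
        _ = ((x * x) * y) * z := by rw [CProofAux.Nl_sq K]
        _ = (x * (x * y)) * z := by rw [CProofAux.hA K]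
    · intro x y z
      calc ((z * y) * x) * x = (z * y) * (x * x) := by rw [CProofAux.hB K]
        _ = z * (y * (x * x)) := by rw [CProofAux.Nr_sq K]
        _ = z * ((y * x) * x) := by rw [CProofAux.hB K]
end

section
/- A loop Q is a C loop if and only if Q is an inverse property loop in which every square belongs to the nucleus. -/
namespace LoopAux
open Loop
variable {Q : Type*} [Loop Q]

lemma left_cancel {a b c : Q} (h : a * b = a * c) : b = c := by
  have h2 := congrArg (ld a) h
  rwa [ld_mul, ld_mul] at h2

lemma right_cancel {a b c : Q} (h : b * a = c * a) : b = c := by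
  have h2 := congrArg (fun t => rd t a) h
  simp only [mul_rd] at h2
  exact h2

lemma linv_mul (x : Q) : linv x * x = 1 := rd_mul 1 x

lemma mul_rinv (x : Q) : x * rinv x = 1 := mul_ld x 1

section IP
variable (hL : ∀ x y : Q, linv x * (x * y) = y)
variable (hR : ∀ x y : Q, (y * x) * rinv x = y)
include hL hR

lemma linv_eq_rinv (x : Q) : linv x = rinv x := by
  have h := hL x (rinv x)
  rwa [mul_rinv, Loop.mul_one] at h

lemma mul_linv (x : Q) : x * linv x = 1 := by
  rw [linv_eq_rinv hL hR]; exact mul_rinv x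

lemma linv_linv (x : Q) : linv (linv x) = x := by
  have h := hR (linv x) x
  rw [mul_linv hL hR, Loop.one_mul, ← linv_eq_rinv hL hR] at h
  exact h

lemma lip' (x y : Q) : x * (linv x * y) = y := by
  have h := hL (linv x) y
  rwa [linv_linv hL hR] at h

lemma rip' (x y : Q) : (y * linv x) * x = y := by
  have h := hR (linv x) y
  rwa [← linv_eq_rinv hL hR, linv_linv hL hR] at h

lemma linv_rev (x y : Q) : linv (x * y) = linv y * linv x := by
  have h1 : linv (x * y) * x = linv y := by
    have h := hL (x * y) (linv y)
    rwa [show (x * y) * linv y = x by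
      rw [linv_eq_rinv hL hR]; exact hR y x] at h
  have h2 := hR x (linv (x * y))
  rw [h1, ← linv_eq_rinv hL hR] at h2
  exact h2.symm

/-- In an IP loop, a right-nuclear element is middle-nuclear. -/
lemma nr_to_nm {a : Q} (hNr : ∀ y z : Q, (y * z) * a = y * (z * a)) :
    ∀ u v : Q, u * (a * v) = (u * a) * v := by
  intro u v
  have hx : (u * (a * v)) * linv (a * v) = u := by
    rw [linv_eq_rinv hL hR]; exact hR (a * v) u
  have hxa : u * a = (u * (a * v)) * linv v := by
    calc u * a = ((u * (a * v)) * linv (a * v)) * a := by rw [hx]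
      _ = ((u * (a * v)) * (linv v * linv a)) * a := by rw [linv_rev hL hR]
      _ = (u * (a * v)) * ((linv v * linv a) * a) := hNr _ _
      _ = (u * (a * v)) * linv v := by rw [rip' hL hR]
  rw [hxa, rip' hL hR]

end IP
end LoopAux

open Loop LoopAux in
theorem stmt7 {Q : Type*} [Loop Q] :
    ((∀ x y z : Q, x * (x * (y * z)) = (x * (x * y)) * z) ∧
     (∀ x y z : Q, ((z * y) * x) * x = z * ((y * x) * x))) ↔
      ((∀ x y : Q, linv x * (x * y) = y) ∧ (∀ x y : Q, (y * x) * rinv x = y) ∧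
        ∀ x : Q, x * x ∈ N Q) := by
  constructor
  · rintro ⟨hLC, hRC⟩
    -- LIP
    have hL : ∀ x y : Q, linv x * (x * y) = y := by
      intro x y
      have h := hLC (linv x) x y
      rw [linv_mul, Loop.mul_one] at h
      exact left_cancel h
    -- RIP
    have hR : ∀ x y : Q, (y * x) * rinv x = y := by
      intro x y
      have h := hRC (rinv x) x y
      rw [mul_rinv, Loop.one_mul] at h
      exact right_cancel h
    refine ⟨hL, hR, fun x => ?_⟩
    -- alternative laws
    have hla : ∀ y : Q, x * (x * y) = (x * x) * y := by
      intro y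
      have h := hLC x 1 y
      rwa [Loop.one_mul, Loop.mul_one] at h
    have hra : ∀ y : Q, (y * x) * x = y * (x * x) := by
      intro y
      have h := hRC x 1 y
      rwa [Loop.one_mul, Loop.mul_one] at h
    have hNl : ∀ y z : Q, (x * x) * (y * z) = ((x * x) * y) * z := by
      intro y z
      rw [← hla (y * z), hLC, hla]
    have hNr : ∀ y z : Q, (y * z) * (x * x) = y * (z * (x * x)) := by
      intro y z
      rw [← hra (y * z), hRC, hra]
    have hNm := nr_to_nm hL hR hNr
    exact ⟨⟨hNl, fun u v => hNm u v⟩, hNr⟩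
  · rintro ⟨hL, hR, hN⟩
    have hNl : ∀ x y z : Q, (x * x) * (y * z) = ((x * x) * y) * z :=
      fun x => (hN x).1.1
    have hNm : ∀ x y z : Q, y * ((x * x) * z) = (y * (x * x)) * z :=
      fun x => (hN x).1.2
    have hNr : ∀ x y z : Q, (y * z) * (x * x) = y * (z * (x * x)) :=
      fun x => (hN x).2
    -- alternative laws
    have hla : ∀ x y : Q, x * (x * y) = (x * x) * y := by
      intro x y
      have hx : linv x * (x * x) = x := hL x x
      calc x * (x * y) = x * ((linv x * (x * x)) * y) := by rw [hx]
        _ = x * (linv x * ((x * x) * y)) := by rw [hNm]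
        _ = (x * x) * y := lip' hL hR x _
    have hra : ∀ x y : Q, (y * x) * x = y * (x * x) := by
      intro x y
      have hx : (x * x) * linv x = x := by
        rw [linv_eq_rinv hL hR]; exact hR x x
      calc (y * x) * x = (y * ((x * x) * linv x)) * x := by rw [hx]
        _ = ((y * (x * x)) * linv x) * x := by rw [hNm]
        _ = y * (x * x) := rip' hL hR x _
    constructor
    · intro x y z
      rw [hla x (y * z), hNl, hla]
    · intro x y z
      rw [hra x (z * y), hNr, hra]
end

section
/- Let Q be a loop with a subloop S contained in N_λ ∩ N_μ. If T_x(s) ∈ S and T_x^{-1}(s) ∈ S for every x ∈ Q and s ∈ S, then S is a normal subloop of Q. Moreover L_{xy}^{-1}L_xL_y(s) = T_{xy}^{-1}T_xT_y(s) for all x,y ∈ Q and s ∈ S. -/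
open Loop in
theorem stmt8 {Q : Type*} [Loop Q] (S : Set Q) (hsub : IsSubloop S)
    (hN : S ⊆ Nl Q ∩ Nm Q)
    (hT : ∀ x : Q, ∀ s ∈ S, rd (x * s) x ∈ S ∧ ld x (s * x) ∈ S) :
    IsNormal S ∧
      ∀ x y : Q, ∀ s ∈ S,
        ld (x * y) (x * (y * s)) =
          ld (x * y) (rd (x * rd (y * s) y) x * (x * y)) := by
  have key : ∀ x y : Q, ∀ s ∈ S, x * (y * s) = rd (x * rd (y * s) y) x * (x * y) := by
    intro x y s hs
    have hs1 : rd (y * s) y ∈ S := (hT y s hs).1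
    have hs2 : rd (x * rd (y * s) y) x ∈ S := (hT x _ hs1).1
    calc x * (y * s) = x * (rd (y * s) y * y) := by rw [rd_mul]
      _ = (x * rd (y * s) y) * y := (hN hs1).2 x y
      _ = (rd (x * rd (y * s) y) x * x) * y := by rw [rd_mul]
      _ = rd (x * rd (y * s) y) x * (x * y) := ((hN hs2).1 x y).symm
  constructor
  · refine ⟨hsub, fun x y => ⟨?_, ?_, ?_⟩⟩
    · ext z
      constructor
      · rintro ⟨s, hs, rfl⟩
        exact ⟨rd (x * s) x, (hT x s hs).1, rd_mul _ _⟩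
      · rintro ⟨s, hs, rfl⟩
        exact ⟨ld x (s * x), (hT x s hs).2, mul_ld _ _⟩
    · rw [Set.image_image, Set.image_image]
      exact Set.image_congr fun s hs => ((hN hs).2 x y).symm
    · rw [Set.image_image]
      ext z
      constructor
      · rintro ⟨s, hs, rfl⟩
        have hs2 : rd (x * rd (y * s) y) x ∈ S := (hT x _ ((hT y s hs).1)).1
        refine ⟨ld (x * y) (rd (x * rd (y * s) y) x * (x * y)), (hT (x * y) _ hs2).2, ?_⟩
        simp only [mul_ld]
        exact (key x y s hs).symm
      · rintro ⟨s, hs, rfl⟩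
        have hs2 : rd ((x * y) * s) (x * y) ∈ S := (hT (x * y) s hs).1
        have hs2' : ld x (rd ((x * y) * s) (x * y) * x) ∈ S := (hT x _ hs2).2
        have hs3 : ld y (ld x (rd ((x * y) * s) (x * y) * x) * y) ∈ S := (hT y _ hs2').2
        refine ⟨_, hs3, ?_⟩
        calc x * (y * ld y (ld x (rd ((x * y) * s) (x * y) * x) * y))
            = x * (ld x (rd ((x * y) * s) (x * y) * x) * y) := by rw [mul_ld]
          _ = (x * ld x (rd ((x * y) * s) (x * y) * x)) * y := (hN hs2').2 x y
          _ = (rd ((x * y) * s) (x * y) * x) * y := by rw [mul_ld]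
          _ = rd ((x * y) * s) (x * y) * (x * y) := ((hN hs2).1 x y).symm
          _ = (x * y) * s := rd_mul _ _
  · intro x y s hs
    rw [key x y s hs]
end

section
/- Let Q be an LC loop (satisfying x(x·yz) = (x·xy)z). Then for every x ∈ Q and a ∈ N_μ, the element (xa)x^{-1} lies in N_μ. -/
namespace LCaux
open Loop
variable {Q : Type*} [Loop Q]
variable (hlc : ∀ x y z : Q, x * (x * (y * z)) = (x * (x * y)) * z)

theorem lcancel {x y z : Q} (h : x * y = x * z) : y = z := by
  have := congrArg (ld x) h; rwa [ld_mul, ld_mul] at this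

include hlc

theorem E1 (x z : Q) : x * (rinv x * z) = z := by
  apply lcancel (x := x)
  have h := hlc x (rinv x) z
  rw [show x * rinv x = 1 from mul_ld x 1, Loop.mul_one] at h
  rw [h]

theorem E2 (x z : Q) : rinv x * (x * z) = z := by
  apply lcancel (x := x); rw [E1 hlc]

theorem inv_mul (x : Q) : rinv x * x = 1 := by
  have := E2 hlc x 1; rwa [Loop.mul_one] at this

omit hlc in
theorem mul_inv (x : Q) : x * rinv x = 1 := mul_ld x 1

theorem linv_eq (x : Q) : linv x = rinv x := by
  unfold linv
  rw [show (1 : Q) = rinv x * x from (inv_mul hlc x).symm, mul_rd]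

theorem inv_inv (x : Q) : rinv (rinv x) = x := by
  apply lcancel (x := rinv x)
  rw [mul_inv, inv_mul hlc]

theorem Nm_inv {a : Q} (ha : a ∈ Nm Q) : rinv a ∈ Nm Q := by
  intro x y
  have hx : rd x a * a = x := rd_mul x a
  rw [← hx, ← ha, E1 hlc, ← ha, mul_inv, Loop.mul_one]

theorem mul_inv_rev {a : Q} (ha : a ∈ Nm Q) (u : Q) :
    rinv (u * a) = rinv a * rinv u := by
  apply lcancel (x := u * a)
  rw [mul_inv, ← ha, E1 hlc, mul_inv]

/-- `a ∈ Nm → a⁻¹ ∈ Nl` -/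
theorem Nm_inv_Nl {a : Q} (ha : a ∈ Nm Q) : rinv a ∈ Nl Q := by
  intro w y
  -- claim : (rinv a * w) * y = rinv a * (w * y)
  have hrw : rinv a * w = rinv (rinv w * a) := by
    rw [mul_inv_rev hlc ha, inv_inv hlc]
  rw [hrw]
  apply lcancel (x := rinv w * a)
  rw [E1 hlc, ← ha, E1 hlc]
  have := E1 hlc (rinv w) y
  rw [inv_inv hlc] at this
  rw [this]

theorem Nm_to_Nl {a : Q} (ha : a ∈ Nm Q) : a ∈ Nl Q := by
  have := Nm_inv_Nl hlc (Nm_inv hlc ha)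
  rwa [inv_inv hlc] at this

theorem Nl_inv {c : Q} (hc : c ∈ Nl Q) : rinv c ∈ Nl Q := by
  intro x y
  have hx : x = c * (rinv c * x) := (E1 hlc c x).symm
  conv_lhs => rw [hx]
  rw [← hc, E2 hlc]

/-- `c ∈ Nl → c⁻¹ ∈ Nm` -/
theorem Nl_inv_Nm {c : Q} (hc : c ∈ Nl Q) : rinv c ∈ Nm Q := by
  intro u t
  have huc : u * rinv c = rinv (c * rinv u) := by
    apply lcancel (x := c * rinv u)
    rw [mul_inv, ← hc, E2 hlc, mul_inv]
  rw [huc]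
  apply lcancel (x := c * rinv u)
  rw [E1 hlc, ← hc, E2 hlc, E1 hlc]

theorem Nl_to_Nm {c : Q} (hc : c ∈ Nl Q) : c ∈ Nm Q := by
  have := Nl_inv_Nm hlc (Nl_inv hlc hc)
  rwa [inv_inv hlc] at this

theorem main {a : Q} (ha : a ∈ Nm Q) (x : Q) : (x * a) * rinv x ∈ Nm Q := by
  set m : Q := rinv x * a with hm
  have ha' : rinv a ∈ Nl Q := Nm_inv_Nl hlc ha
  -- b = x * (a * rinv x)
  have hb : (x * a) * rinv x = x * (a * rinv x) := (ha x (rinv x)).symm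
  -- s = m * rinv x = rinv x * (a * rinv x)
  have hs : m * rinv x = rinv x * (a * rinv x) := (ha (rinv x) (rinv x)).symm
  -- m * rinv a = rinv x
  have hma : m * rinv a = rinv x := by
    rw [hm, ← ha, mul_inv, Loop.mul_one]
  -- s = m * (m * rinv a)
  have hs2 : m * rinv x = m * (m * rinv a) := by rw [hma]
  -- b = x * (x * s)
  have hbs : (x * a) * rinv x = x * (x * (m * rinv x)) := by
    rw [hs, E1 hlc, hb]
  -- s ∈ Nl
  have hsNl : m * rinv x ∈ Nl Q := by
    intro u v
    rw [hs2, ← hlc m (rinv a) (u * v), ha' u v, hlc m (rinv a * u) v,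
      hlc m (rinv a) u]
  -- b ∈ Nl
  have hbNl : (x * a) * rinv x ∈ Nl Q := by
    intro u v
    rw [hbs, ← hlc x (m * rinv x) (u * v), hsNl u v,
      hlc x ((m * rinv x) * u) v, hlc x (m * rinv x) u]
  exact Nl_to_Nm hlc hbNl

end LCaux

open Loop in
theorem stmt10 {Q : Type*} [Loop Q]
    (hlc : ∀ x y z : Q, x * (x * (y * z)) = (x * (x * y)) * z) :
    ∀ x : Q, ∀ a ∈ Nm Q, (x * a) * linv x ∈ Nm Q := by
  intro x a ha
  rw [LCaux.linv_eq hlc]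
  exact LCaux.main hlc ha x
end

section
/- A left Bol loop Q satisfies the LC identity x(x·yz) = (x·xy)z if and only if x² ∈ N_λ for every x ∈ Q. -/
open Loop in
theorem stmt12 {Q : Type*} [Loop Q]
    (hbol : ∀ x y z : Q, x * (y * (x * z)) = (x * (y * x)) * z) :
    (∀ x y z : Q, x * (x * (y * z)) = (x * (x * y)) * z) ↔
      (∀ x : Q, x * x ∈ Nl Q) := by
  have halt : ∀ x z : Q, x * (x * z) = (x * x) * z := by
    intro x z
    have h := hbol x 1 z
    rwa [Loop.one_mul, Loop.one_mul] at h
  constructor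
  · intro h x y z
    have := h x y z
    rw [halt x (y * z), halt x y] at this
    exact this
  · intro h x y z
    rw [halt x (y * z), halt x y]
    exact h x y z
end

section
/- In any loop, the identity x^λ\y · zx = x(yz·x) (Osborn) holds for all x,y,z if and only if the identity x\(xy·z) = (y·zx^ρ)/x^ρ holds for all x,y,z. -/
open Loop in
theorem stmt15 {Q : Type*} [Loop Q] :
    (∀ x y z : Q, ld (linv x) y * (z * x) = x * ((y * z) * x)) ↔
      (∀ x y z : Q, ld x ((x * y) * z) = rd (y * (z * rinv x)) (rinv x)) := by
  have mul_rinv : ∀ x : Q, x * rinv x = 1 := fun x => Loop.mul_ld x 1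
  have linv_mul : ∀ x : Q, linv x * x = 1 := fun x => Loop.rd_mul 1 x
  have linv_rinv : ∀ x : Q, linv (rinv x) = x := by
    intro x
    have := Loop.mul_rd x (rinv x)
    rw [mul_rinv] at this
    exact this
  have rinv_linv : ∀ x : Q, rinv (linv x) = x := by
    intro x
    have := Loop.ld_mul (linv x) x
    rw [linv_mul] at this
    exact this
  constructor
  · intro h x y z
    have hA : y * (z * rinv x) = rinv x * (((x * y) * z) * rinv x) := by
      have := h (rinv x) (x * y) z
      rw [linv_rinv, Loop.ld_mul] at this
      exact this
    have hB : ld x ((x * y) * z) * rinv x = rinv x * (((x * y) * z) * rinv x) := by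
      have := h (rinv x) ((x * y) * z) 1
      rw [linv_rinv, Loop.one_mul, Loop.mul_one] at this
      exact this
    rw [← hA] at hB
    rw [← hB, Loop.mul_rd]
  · intro h x y z
    have h2 : ∀ x y z : Q, ld x ((x * y) * z) * rinv x = y * (z * rinv x) := by
      intro x y z
      rw [h x y z, Loop.rd_mul]
    have h2a : ∀ x Y z : Q, ld x (Y * z) * rinv x = ld x Y * (z * rinv x) := by
      intro x Y z
      have := h2 x (ld x Y) z
      rw [Loop.mul_ld] at this
      exact this
    have e1 : ld (linv x) y * (z * x) = ld (linv x) (y * z) * x := by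
      have := h2a (linv x) y z
      rw [rinv_linv] at this
      exact this.symm
    have e2 : ld (linv x) (y * z) * x = x * ((y * z) * x) := by
      have := h2a (linv x) 1 (y * z)
      rw [rinv_linv, Loop.one_mul,
        show Loop.ld (linv x) 1 = x from rinv_linv x] at this
      exact this
    rw [e1, e2]
end

section
/- An Osborn loop with the left inverse property is a Moufang loop. Similarly, an Osborn loop that is flexible (xy·x = x·yx) is Moufang, and an Osborn loop with the left alternative property is Moufang. -/
namespace Loop
variable {Q : Type*} [Loop Q]

theorem aux_left_cancel {a b c : Q} (h : a * b = a * c) : b = c := by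
  have := congrArg (ld a) h
  rwa [ld_mul, ld_mul] at this

theorem aux_right_cancel {a b c : Q} (h : b * a = c * a) : b = c := by
  have := congrArg (fun t => rd t a) h
  simpa [mul_rd] using this

/-- In any Osborn loop, `(linv x) \ 1 = x`. -/
theorem aux_f_one (hosb : ∀ x y z : Q, ld (linv x) y * (z * x) = x * ((y * z) * x))
    (x : Q) : ld (linv x) 1 = x := by
  have h : ∀ w : Q, ld (linv x) 1 * w = x * w := by
    intro w
    have := hosb x 1 (rd w x)
    rwa [one_mul, rd_mul] at this
  have := h 1
  rwa [mul_one, mul_one] at this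

/-- In any Osborn loop, `((linv x) \ z) * x = x * (z * x)`. -/
theorem aux_fA (hosb : ∀ x y z : Q, ld (linv x) y * (z * x) = x * ((y * z) * x))
    (x z : Q) : ld (linv x) z * x = x * (z * x) := by
  have := hosb x z 1
  rwa [one_mul, mul_one] at this

/-- The key reduction: if `(linv x) \ y = x * y` for all `y`, the Moufang identity holds at `x`. -/
theorem aux_moufang_of (hosb : ∀ x y z : Q, ld (linv x) y * (z * x) = x * ((y * z) * x))
    {x : Q} (h : ∀ y : Q, ld (linv x) y = x * y) (y z : Q) :
    (x * y) * (z * x) = x * ((y * z) * x) := by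
  rw [← h y, hosb]

end Loop

open Loop in
theorem stmt16 {Q : Type*} [Loop Q]
    (hosb : ∀ x y z : Q, ld (linv x) y * (z * x) = x * ((y * z) * x)) :
    ((∀ x y : Q, linv x * (x * y) = y) → ∀ x y z : Q, (x * y) * (z * x) = x * ((y * z) * x)) ∧
    ((∀ x y : Q, (x * y) * x = x * (y * x)) → ∀ x y z : Q, (x * y) * (z * x) = x * ((y * z) * x)) ∧
    ((∀ x y : Q, x * (x * y) = (x * x) * y) → ∀ x y z : Q, (x * y) * (z * x) = x * ((y * z) * x)) := by
  refine ⟨?_, ?_, ?_⟩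
  · -- LIP case
    intro hlip x y z
    refine aux_moufang_of hosb (fun w => ?_) y z
    calc ld (linv x) w = ld (linv x) (linv x * (x * w)) := by rw [hlip]
      _ = x * w := ld_mul _ _
  · -- flexible case
    intro hflex x y z
    refine aux_moufang_of hosb (fun w => ?_) y z
    apply aux_right_cancel (a := x)
    rw [aux_fA hosb, ← hflex]
  · -- LAP case
    intro hlap x y z
    refine aux_moufang_of hosb (fun w => ?_) y z
    -- key identity: ld (linv x) w = (linv x * (x*x)) * w
    have key : ∀ v : Q, ld (linv x) v = (linv x * (x * x)) * v := by
      intro v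
      have hC : x * (x * (v * x)) = (x * x) * (v * x) := hlap x (v * x)
      -- LHS rewriting
      have hL : x * (x * (v * x)) = ld (linv x) (ld (linv x) v) * x := by
        rw [← aux_fA hosb x v, ← aux_fA hosb x (ld (linv x) v)]
      -- RHS rewriting
      have hR : (x * x) * (v * x) = ld (linv x) ((linv x * (x * x)) * v) * x := by
        have h1 : (x * x) * (v * x)
            = ld (linv x) (linv x * (x * x)) * (v * x) := by rw [ld_mul]
        rw [h1, hosb, aux_fA hosb]
      have h2 : ld (linv x) (ld (linv x) v) = ld (linv x) ((linv x * (x * x)) * v) :=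
        aux_right_cancel (hL ▸ hR ▸ hC)
      have h3 := congrArg (fun t => linv x * t) h2
      simpa [mul_ld] using h3
    have hone := key 1
    rw [aux_f_one hosb, Loop.mul_one] at hone
    rw [key w, ← hone]
end

section
/- In an Osborn loop Q, R_x^{-1}L_yR_x = L_{x^λ}^{-1}L_{x^λ y} and L_x^{-1}R_yL_x = R_{x^ρ}^{-1}R_{yx^ρ} for all x,y; consequently the left multiplication group and the right multiplication group are normal subgroups of the multiplication group of Q. -/
namespace Loop
variable {Q : Type*} [Loop Q]
/-- left translation as a permutation -/
def Lperm (x : Q) : Equiv.Perm Q :=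
  ⟨(x * ·), ld x, fun y => ld_mul x y, fun y => mul_ld x y⟩
/-- right translation as a permutation -/
def Rperm (x : Q) : Equiv.Perm Q :=
  ⟨(· * x), fun y => rd y x, fun y => mul_rd y x, fun y => rd_mul y x⟩
/-- multiplication group -/
def Mlt (Q : Type*) [Loop Q] : Subgroup (Equiv.Perm Q) :=
  Subgroup.closure (Set.range (Lperm (Q := Q)) ∪ Set.range (Rperm (Q := Q)))
/-- left multiplication group -/
def MltL (Q : Type*) [Loop Q] : Subgroup (Equiv.Perm Q) :=
  Subgroup.closure (Set.range (Lperm (Q := Q)))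
/-- right multiplication group -/
def MltR (Q : Type*) [Loop Q] : Subgroup (Equiv.Perm Q) :=
  Subgroup.closure (Set.range (Rperm (Q := Q)))
end Loop


section GrpAux
variable {G : Type*} [Group G]

lemma conj_mem_closure_aux {S : Set G} {g : G}
    (hg : ∀ s ∈ S, g * s * g⁻¹ ∈ Subgroup.closure S) :
    ∀ h ∈ Subgroup.closure S, g * h * g⁻¹ ∈ Subgroup.closure S := by
  intro h hh
  induction hh using Subgroup.closure_induction with
  | mem s hs => exact hg s hs
  | one => simpa using one_mem _
  | mul a b _ _ iha ihb =>
      have e : g * (a * b) * g⁻¹ = (g * a * g⁻¹) * (g * b * g⁻¹) := by group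
      rw [e]; exact mul_mem iha ihb
  | inv a _ iha =>
      have e : g * a⁻¹ * g⁻¹ = (g * a * g⁻¹)⁻¹ := by group
      rw [e]; exact inv_mem iha

end GrpAux

namespace OsbAux
open Loop
variable {Q : Type*} [Loop Q]

lemma Lperm_apply (x y : Q) : Lperm x y = x * y := rfl
lemma Rperm_apply (x y : Q) : Rperm x y = y * x := rfl
lemma Lperm_inv_apply (x y : Q) : (Lperm x)⁻¹ y = ld x y := rfl
lemma Rperm_inv_apply (x y : Q) : (Rperm x)⁻¹ y = rd y x := rfl
lemma Lperm_one : Lperm (1 : Q) = 1 := Equiv.ext fun z => one_mul z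
lemma Rperm_one : Rperm (1 : Q) = 1 := Equiv.ext fun z => mul_one z

variable (hosb : ∀ x y z : Q, ld (linv x) y * (z * x) = x * ((y * z) * x))
include hosb

lemma osbE (u x z : Q) : u * (z * x) = x * (((linv x * u) * z) * x) := by
  have h := hosb x (linv x * u) z
  rw [ld_mul] at h
  exact h

lemma osb1 (v x : Q) : ld (linv x) v * x = x * (v * x) := by
  have h := hosb x v 1
  rwa [Loop.one_mul, Loop.mul_one] at h

lemma linv_mul (x : Q) : linv x * x = 1 := by
  have h := osbE hosb 1 x 1
  rw [Loop.one_mul, Loop.one_mul, Loop.mul_one, Loop.mul_one] at h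
  -- h : x = x * (linv x * x)
  have h2 := ld_mul x 1
  rw [Loop.mul_one] at h2
  calc linv x * x = ld x (x * (linv x * x)) := (ld_mul x _).symm
    _ = ld x x := by rw [← h]
    _ = 1 := h2

omit hosb in
lemma mul_rinv (x : Q) : x * rinv x = 1 := mul_ld x 1

lemma rinv_linv (x : Q) : rinv (linv x) = x := by
  show ld (linv x) 1 = x
  rw [← linv_mul hosb x, ld_mul]

omit hosb in
lemma linv_rinv (x : Q) : linv (rinv x) = x := by
  show rd 1 (rinv x) = x
  rw [← mul_rinv x, mul_rd]

lemma key1 (x y z : Q) : rd (y * (z * x)) x = ld (linv x) ((linv x * y) * z) := by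
  have h1 : y * (z * x) = ld (linv x) ((linv x * y) * z) * x := by
    rw [osbE hosb y x z, osb1 hosb ((linv x * y) * z) x]
  rw [h1, mul_rd]

lemma keyF (x w y : Q) : ld x (w * y) * rinv x = ld x w * (y * rinv x) := by
  have e1 : ld x w * (y * rinv x) = rinv x * ((w * y) * rinv x) := by
    have h := osbE hosb (ld x w) (rinv x) y
    rwa [linv_rinv, mul_ld] at h
  have e2 : ld x (w * y) * rinv x = rinv x * ((w * y) * rinv x) := by
    have h := osb1 hosb (w * y) (rinv x)
    rwa [linv_rinv] at h
  rw [e1, e2]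

lemma key2 (x y z : Q) : ld x ((x * z) * y) = rd (z * (y * rinv x)) (rinv x) := by
  have h := keyF hosb x (x * z) y
  rw [ld_mul] at h
  rw [← h, mul_rd]

lemma perm1 (x y : Q) :
    (Rperm x)⁻¹ * Lperm y * Rperm x = (Lperm (linv x))⁻¹ * Lperm (linv x * y) := by
  ext z
  show rd (y * (z * x)) x = ld (linv x) (linv x * y * z)
  exact key1 hosb x y z

lemma perm2 (x y : Q) :
    (Lperm x)⁻¹ * Rperm y * Lperm x = (Rperm (rinv x))⁻¹ * Rperm (y * rinv x) := by
  ext z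
  show ld x ((x * z) * y) = rd (z * (y * rinv x)) (rinv x)
  exact key2 hosb x y z


omit hosb in
lemma memL (y : Q) : Lperm y ∈ MltL Q := Subgroup.subset_closure ⟨y, rfl⟩
omit hosb in
lemma memR (y : Q) : Rperm y ∈ MltR Q := Subgroup.subset_closure ⟨y, rfl⟩

lemma conjR_L_mem (t y : Q) : (Rperm t)⁻¹ * Lperm y * Rperm t ∈ MltL Q := by
  rw [perm1 hosb]
  exact mul_mem (inv_mem (memL _)) (memL _)

lemma conjL_R_mem (t y : Q) : (Lperm t)⁻¹ * Rperm y * Lperm t ∈ MltR Q := by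
  rw [perm2 hosb]
  exact mul_mem (inv_mem (memR _)) (memR _)

lemma conjR_L'_mem (t y : Q) : Rperm t * Lperm y * (Rperm t)⁻¹ ∈ MltL Q := by
  have h1 := perm1 hosb t (ld (linv t) y)
  rw [mul_ld] at h1
  have h2 := perm1 hosb t t
  rw [linv_mul hosb, Lperm_one, _root_.mul_one] at h2
  rw [← h2] at h1
  have h5 := congrArg (fun g => Rperm t * g * (Rperm t)⁻¹) h1
  simp only [mul_assoc, mul_inv_cancel_left, inv_mul_cancel_left, mul_inv_cancel,
    inv_mul_cancel, _root_.mul_one, _root_.one_mul] at h5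
  -- inspect h5
  have goal : Rperm t * Lperm y * (Rperm t)⁻¹ = (Lperm t)⁻¹ * Lperm (ld (linv t) y) := by
    rw [h5]; group
  rw [goal]
  exact mul_mem (inv_mem (memL _)) (memL _)

lemma conjL_R'_mem (t y : Q) : Lperm t * Rperm y * (Lperm t)⁻¹ ∈ MltR Q := by
  have h1 := perm2 hosb t (rd y (rinv t))
  rw [rd_mul] at h1
  have h2 := perm2 hosb t t
  rw [mul_rinv, Rperm_one, _root_.mul_one] at h2
  rw [← h2] at h1
  have h5 := congrArg (fun g => Lperm t * g * (Lperm t)⁻¹) h1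
  simp only [mul_assoc, mul_inv_cancel_left, inv_mul_cancel_left, mul_inv_cancel,
    inv_mul_cancel, _root_.mul_one, _root_.one_mul] at h5
  have goal : Lperm t * Rperm y * (Lperm t)⁻¹ = (Rperm t)⁻¹ * Rperm (rd y (rinv t)) := by
    rw [h5]; group
  rw [goal]
  exact mul_mem (inv_mem (memR _)) (memR _)

end OsbAux

set_option linter.unusedSectionVars false in
open Loop in
theorem stmt17 {Q : Type*} [Loop Q]
    (hosb : ∀ x y z : Q, ld (linv x) y * (z * x) = x * ((y * z) * x)) :
    (∀ x y : Q,
      (Rperm x)⁻¹ * Lperm y * Rperm x = (Lperm (linv x))⁻¹ * Lperm (linv x * y) ∧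
      (Lperm x)⁻¹ * Rperm y * Lperm x = (Rperm (rinv x))⁻¹ * Rperm (y * rinv x)) ∧
    (∀ g ∈ Mlt Q, ∀ h ∈ MltL Q, g * h * g⁻¹ ∈ MltL Q) ∧
    (∀ g ∈ Mlt Q, ∀ h ∈ MltR Q, g * h * g⁻¹ ∈ MltR Q) := by
  refine ⟨fun x y => ⟨OsbAux.perm1 hosb x y, OsbAux.perm2 hosb x y⟩, ?_, ?_⟩
  · have hnorm : Mlt Q ≤ Subgroup.normalizer (MltL Q : Set (Equiv.Perm Q)) := by
      rw [Mlt]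
      refine (Subgroup.closure_le _).mpr ?_
      rintro g (⟨t, rfl⟩ | ⟨t, rfl⟩)
      · exact Subgroup.le_normalizer (OsbAux.memL t)
      · rw [SetLike.mem_coe, Subgroup.mem_normalizer_iff]
        intro h
        constructor
        · intro hh
          exact conj_mem_closure_aux
            (by rintro s ⟨y, rfl⟩; exact OsbAux.conjR_L'_mem hosb t y) h hh
        · intro hh
          have h2 := conj_mem_closure_aux (g := (Rperm t)⁻¹)
            (by rintro s ⟨y, rfl⟩; simpa [MltL] using OsbAux.conjR_L_mem hosb t y) _ hh
          simpa [mul_assoc, MltL] using h2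
    intro g hg h hh
    exact (Subgroup.mem_normalizer_iff.mp (hnorm hg) h).mp hh
  · have hnorm : Mlt Q ≤ Subgroup.normalizer (MltR Q : Set (Equiv.Perm Q)) := by
      rw [Mlt]
      refine (Subgroup.closure_le _).mpr ?_
      rintro g (⟨t, rfl⟩ | ⟨t, rfl⟩)
      · rw [SetLike.mem_coe, Subgroup.mem_normalizer_iff]
        intro h
        constructor
        · intro hh
          exact conj_mem_closure_aux
            (by rintro s ⟨y, rfl⟩; exact OsbAux.conjL_R'_mem hosb t y) h hh
        · intro hh
          have h2 := conj_mem_closure_aux (g := (Lperm t)⁻¹)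
            (by rintro s ⟨y, rfl⟩; simpa [MltR] using OsbAux.conjL_R_mem hosb t y) _ hh
          simpa [mul_assoc, MltR] using h2
      · exact Subgroup.le_normalizer (OsbAux.memR t)
    intro g hg h hh
    exact (Subgroup.mem_normalizer_iff.mp (hnorm hg) h).mp hh
end

section
/- A crossed inverse property Osborn loop is a commutative Moufang loop. -/
open Loop in
theorem stmt18 {Q : Type*} [Loop Q]
    (hosb : ∀ x y z : Q, ld (linv x) y * (z * x) = x * ((y * z) * x))
    (hcip : ∀ x y : Q, (x * y) * rinv x = y) :
    (∀ x y : Q, x * y = y * x) ∧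
      (∀ x y z : Q, (x * y) * (z * x) = x * ((y * z) * x)) := by
  have h1 : ∀ x : Q, x * rinv x = 1 := by
    intro x
    have h := hcip x 1
    rwa [Loop.mul_one] at h
  have h2 : ∀ x y : Q, x * (y * rinv x) = y := by
    intro x y
    have h := hcip x (ld x y)
    rw [Loop.mul_ld] at h
    rw [h, Loop.mul_ld]
  have h3 : ∀ x : Q, rinv (linv x) = x := by
    intro x
    have h := hosb x 1 1
    rw [Loop.one_mul, Loop.one_mul, Loop.one_mul] at h
    have h' : rinv (linv x) * x = x * x := h
    calc rinv (linv x) = rd (rinv (linv x) * x) x := (Loop.mul_rd _ _).symm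
      _ = rd (x * x) x := by rw [h']
      _ = x := Loop.mul_rd _ _
  have h4 : ∀ x y : Q, ld (linv x) y = y * x := by
    intro x y
    have h := h2 (linv x) y
    rw [h3] at h
    calc ld (linv x) y = ld (linv x) (linv x * (y * x)) := by rw [h]
      _ = y * x := Loop.ld_mul _ _
  have star : ∀ x y z : Q, (y * x) * (z * x) = x * ((y * z) * x) := by
    intro x y z
    have h := hosb x y z
    rwa [h4] at h
  have hl : ∀ x : Q, linv x * x = 1 := by
    intro x
    have h := h1 (linv x)
    rwa [h3] at h
  have hsurj : ∀ a : Q, linv (rinv a) = a := by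
    intro a
    calc linv (rinv a) = rd (a * rinv a) (rinv a) := by rw [h1]; rfl
      _ = a := Loop.mul_rd _ _
  have comm : ∀ x y : Q, x * y = y * x := by
    have key : ∀ x y : Q, linv x * y = y * linv x := by
      intro x y
      have hA := star x (linv x) y
      rw [hl, Loop.one_mul] at hA
      have hB := star x y (linv x)
      rw [hl, Loop.mul_one] at hB
      have h5 : (linv x * y) * x = (y * linv x) * x := by
        have h6 := hA.symm.trans hB
        calc (linv x * y) * x = ld x (x * ((linv x * y) * x)) := (Loop.ld_mul _ _).symm
          _ = ld x (x * ((y * linv x) * x)) := by rw [h6]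
          _ = (y * linv x) * x := Loop.ld_mul _ _
      calc linv x * y = rd ((linv x * y) * x) x := (Loop.mul_rd _ _).symm
        _ = rd ((y * linv x) * x) x := by rw [h5]
        _ = y * linv x := Loop.mul_rd _ _
    intro x y
    calc x * y = linv (rinv x) * y := by rw [hsurj]
      _ = y * linv (rinv x) := key _ _
      _ = y * x := by rw [hsurj]
  refine ⟨comm, fun x y z => ?_⟩
  rw [comm x y]
  exact star x y z
end

section
/- For a loop Q, any two of the following imply the third: (a) Q is Osborn (x^λ\y·zx = x(yz·x) for all x,y,z); (b) Q is Buchsteiner (x\(xy·z) = (y·zx)/x for all x,y,z); (c) every square x² lies in the nucleus of Q. -/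
namespace LoopAux
open Loop
variable {Q : Type*} [Loop Q]

lemma cancel_right {a b x : Q} (h : a * x = b * x) : a = b := by
  have := congrArg (fun t => Loop.rd t x) h
  simpa [Loop.mul_rd] using this

lemma rd_inj {a b x : Q} (h : Loop.rd a x = Loop.rd b x) : a = b := by
  have := congrArg (fun t => t * x) h
  simpa [Loop.rd_mul] using this

/-- Osborn with z = 1. -/
lemma O1 (hO : ∀ x y z : Q, ld (linv x) y * (z * x) = x * ((y * z) * x)) :
    ∀ x y : Q, ld (linv x) y * x = x * (y * x) := by
  intro x y
  have := hO x y 1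
  simpa [Loop.one_mul, Loop.mul_one] using this

/-- Buchsteiner square identity: `x² y = x ((x (y x))/x)`. -/
lemma B2 (hB : ∀ x y z : Q, ld x ((x * y) * z) = rd (y * (z * x)) x) :
    ∀ x y : Q, (x * x) * y = x * rd (x * (y * x)) x := by
  intro x y
  have h := hB x x y
  calc (x * x) * y = x * ld x ((x * x) * y) := (Loop.mul_ld x _).symm
    _ = x * rd (x * (y * x)) x := by rw [h]

/-- If `x² ∈ Nl` then `x² x^λ = x`. -/
lemma sq_linv {x : Q} (hl : x * x ∈ Nl Q) : (x * x) * linv x = x := by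
  have h := hl (linv x) x
  rw [linv_mul, Loop.mul_one] at h
  exact cancel_right h.symm

/-- If `x² ∈ Nl` then `x (x^λ \ y) = x² y`. -/
lemma sqN {x : Q} (hl : x * x ∈ Nl Q) (y : Q) :
    x * ld (linv x) y = (x * x) * y := by
  have h := hl (linv x) (ld (linv x) y)
  rw [Loop.mul_ld, sq_linv hl] at h
  exact h.symm

/-- From Osborn (z=1): `x^λ \ y = (x (y x)) / x`. -/
lemma linv_ld (hO : ∀ x y z : Q, ld (linv x) y * (z * x) = x * ((y * z) * x))
    (x y : Q) : ld (linv x) y = rd (x * (y * x)) x := by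
  apply cancel_right (x := x)
  rw [O1 hO, Loop.rd_mul]

/-- From Osborn + Buchsteiner: `x (x^λ \ y) = x² y` (no nucleus needed). -/
lemma sqOB (hO : ∀ x y z : Q, ld (linv x) y * (z * x) = x * ((y * z) * x))
    (hB : ∀ x y z : Q, ld x ((x * y) * z) = rd (y * (z * x)) x)
    (x y : Q) : x * ld (linv x) y = (x * x) * y := by
  rw [linv_ld hO, ← B2 hB]

/-- The key derived identity: given Osborn and either Buchsteiner's identity for `x`
or `x² ∈ N`, in the form `x w = (x y) z` where `w x = y (z x)`,
we get `x (x^λ \ ((x^λ y) z)) = stuff`. We state: `rd (y*(z*x)) x = ld (linv x) ((linv x * y) * z)`. -/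
lemma keyW (hO : ∀ x y z : Q, ld (linv x) y * (z * x) = x * ((y * z) * x))
    (x y z : Q) : rd (y * (z * x)) x = ld (linv x) ((linv x * y) * z) := by
  apply cancel_right (x := x)
  rw [Loop.rd_mul, O1 hO]
  have h := hO x (linv x * y) z
  rw [Loop.ld_mul] at h
  exact h

end LoopAux

open Loop LoopAux in
theorem stmt19 {Q : Type*} [Loop Q] :
    (((∀ x y z : Q, ld (linv x) y * (z * x) = x * ((y * z) * x)) ∧
      (∀ x y z : Q, ld x ((x * y) * z) = rd (y * (z * x)) x)) →
        ∀ x : Q, x * x ∈ N Q) ∧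
    (((∀ x y z : Q, ld (linv x) y * (z * x) = x * ((y * z) * x)) ∧
      (∀ x : Q, x * x ∈ N Q)) →
        ∀ x y z : Q, ld x ((x * y) * z) = rd (y * (z * x)) x) ∧
    (((∀ x y z : Q, ld x ((x * y) * z) = rd (y * (z * x)) x) ∧
      (∀ x : Q, x * x ∈ N Q)) →
        ∀ x y z : Q, ld (linv x) y * (z * x) = x * ((y * z) * x)) := by
  refine ⟨?_, ?_, ?_⟩
  · -- Osborn + Buchsteiner ⇒ squares in nucleus
    rintro ⟨hO, hB⟩ x
    set a := x * x with ha
    -- derived identity (D): (x y) z = x² ((x^λ y) z)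
    have hD : ∀ y z : Q, (x * y) * z = a * ((linv x * y) * z) := by
      intro y z
      have h1 : ld x ((x * y) * z) = ld (linv x) ((linv x * y) * z) := by
        rw [hB x y z, keyW hO]
      calc (x * y) * z = x * ld x ((x * y) * z) := (Loop.mul_ld x _).symm
        _ = x * ld (linv x) ((linv x * y) * z) := by rw [h1]
        _ = a * ((linv x * y) * z) := sqOB hO hB x _
    have hl : a ∈ Nl Q := by
      intro u z
      have := hD (ld (linv x) u) z
      rw [Loop.mul_ld, sqOB hO hB] at this
      exact this.symm
    have hr : a ∈ Nr Q := by
      intro y z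
      have h := hB a y z
      rw [← hl y z, Loop.ld_mul] at h
      calc (y * z) * a = rd (y * (z * a)) a * a := by rw [← h]
        _ = y * (z * a) := Loop.rd_mul _ _
    have hm : a ∈ Nm Q := by
      intro u v
      have h := hB v u a
      rw [hr v u, Loop.ld_mul] at h
      rw [h]
      exact (Loop.rd_mul _ _).symm
    exact ⟨⟨hl, hm⟩, hr⟩
  · -- Osborn + squares in nucleus ⇒ Buchsteiner
    rintro ⟨hO, hN⟩ x y z
    have hl : x * x ∈ Nl Q := (hN x).1.1
    have hxw : x * rd (y * (z * x)) x = (x * y) * z := by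
      rw [keyW hO, sqN hl]
      rw [hl (linv x * y) z]
      have h2 : (x * x) * (linv x * y) = x * y := by
        rw [hl (linv x) y, sq_linv hl]
      rw [h2]
    rw [← hxw, Loop.ld_mul]
  · -- Buchsteiner + squares in nucleus ⇒ Osborn
    rintro ⟨hB, hN⟩ x y z
    have hl : x * x ∈ Nl Q := (hN x).1.1
    have h := hB x (ld (linv x) y) z
    rw [sqN hl, ← hl y z, B2 hB x (y * z), Loop.ld_mul] at h
    exact (rd_inj h).symm
end
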